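/- arXiv:1802.08776 — 6 statements merged into one kernel-verified Lean document; each statement's English description precedes it below -/
import Mathlib

section
/- Let 0 < k < 1, R_s > 0 and x ∈ ℝ². The Apollonius disk closedBall((1−k²)⁻¹ • x, k‖x‖/(1−k²)) is contained in the hotspot disk closedBall(x, R_s) if and only if k‖x‖ ≤ (1−k)R_s. In particular, in this regime the SBS association region S(x,k) = {t : ‖t − x‖ ≤ k‖t‖} satisfies S(x,k) ∩ closedBall(x,R_s) = closedBall((1−k²)⁻¹ • x, k‖x‖/(1−k²)). -/
set_option maxHeartbeats 1000000


open Metric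

/-- **Proposition 1, first case (sharp threshold).** For `0 < k < 1`, `R_s > 0`, `x ∈ ℝ²`,
the Apollonius disk `closedBall((1−k²)⁻¹ • x, k‖x‖/(1−k²))` is contained in the hotspot
disk `closedBall(x, R_s)` iff `k‖x‖ ≤ (1−k)R_s`; and in this regime the SBS association
region intersected with the hotspot equals the Apollonius disk. -/
theorem apollonius_subset_hotspot_iff
    (k R_s : ℝ) (hk0 : 0 < k) (hk1 : k < 1) (hR : 0 < R_s)
    (x : EuclideanSpace ℝ (Fin 2)) :
    (closedBall ((1 - k ^ 2)⁻¹ • x) (k * ‖x‖ / (1 - k ^ 2)) ⊆ closedBall x R_s ↔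
      k * ‖x‖ ≤ (1 - k) * R_s) ∧
    (k * ‖x‖ ≤ (1 - k) * R_s →
      {t : EuclideanSpace ℝ (Fin 2) | ‖t - x‖ ≤ k * ‖t‖} ∩ closedBall x R_s =
        closedBall ((1 - k ^ 2)⁻¹ • x) (k * ‖x‖ / (1 - k ^ 2))) := by
  have hk2 : (0:ℝ) < 1 - k ^ 2 := by nlinarith
  have hk1' : (0:ℝ) < 1 - k := by linarith
  have hxn : (0:ℝ) ≤ ‖x‖ := norm_nonneg _
  -- distance from Apollonius center to x
  have hdist : dist ((1 - k ^ 2)⁻¹ • x) x = k ^ 2 / (1 - k ^ 2) * ‖x‖ := by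
    have : (1 - k ^ 2)⁻¹ • x - x = (k ^ 2 / (1 - k ^ 2)) • x := by
      nth_rw 2 [← one_smul ℝ x]
      rw [← sub_smul]
      congr 1
      field_simp
      ring
    rw [dist_eq_norm, this, norm_smul, Real.norm_eq_abs,
      abs_of_pos (by positivity)]
  have hsub : closedBall ((1 - k ^ 2)⁻¹ • x) (k * ‖x‖ / (1 - k ^ 2)) ⊆ closedBall x R_s ↔
      k * ‖x‖ ≤ (1 - k) * R_s := by
    constructor
    · intro h
      -- the point (1-k)⁻¹ • x is in the Apollonius ball
      have hp : (1 - k)⁻¹ • x ∈ closedBall ((1 - k ^ 2)⁻¹ • x) (k * ‖x‖ / (1 - k ^ 2)) := by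
        rw [mem_closedBall, dist_eq_norm, ← sub_smul, norm_smul, Real.norm_eq_abs]
        have : (1 - k)⁻¹ - (1 - k ^ 2)⁻¹ = k / (1 - k ^ 2) := by
          field_simp; ring
        rw [this, abs_of_pos (by positivity)]
        rw [div_mul_eq_mul_div]
      have hq := h hp
      rw [mem_closedBall, dist_eq_norm] at hq
      have he : (1 - k)⁻¹ • x - x = (k / (1 - k)) • x := by
        nth_rw 2 [← one_smul ℝ x]
        rw [← sub_smul]
        congr 1
        field_simp
        ring
      rw [he, norm_smul, Real.norm_eq_abs, abs_of_pos (by positivity),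
        div_mul_eq_mul_div, div_le_iff₀ hk1'] at hq
      linarith [hq]
    · intro h
      apply closedBall_subset_closedBall'
      rw [hdist]
      have h' : k * ‖x‖ / (1 - k) ≤ R_s := by
        rw [div_le_iff₀ hk1']; linarith [h]
      calc k * ‖x‖ / (1 - k ^ 2) + k ^ 2 / (1 - k ^ 2) * ‖x‖
          = k * ‖x‖ / (1 - k) := by field_simp; ring
        _ ≤ R_s := h'
  refine ⟨hsub, fun h => ?_⟩
  have key : ∀ t : EuclideanSpace ℝ (Fin 2),
      ‖t - x‖ ≤ k * ‖t‖ ↔ t ∈ closedBall ((1 - k ^ 2)⁻¹ • x) (k * ‖x‖ / (1 - k ^ 2)) := by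
    intro t
    rw [mem_closedBall, dist_eq_norm]
    have e1 : ‖t - x‖ ^ 2 = ‖t‖ ^ 2 - 2 * (inner ℝ t x : ℝ) + ‖x‖ ^ 2 := norm_sub_sq_real t x
    have e2 : ‖t - (1 - k ^ 2)⁻¹ • x‖ ^ 2
        = ‖t‖ ^ 2 - 2 * ((1 - k ^ 2)⁻¹ * (inner ℝ t x : ℝ)) + ((1 - k ^ 2)⁻¹ * ‖x‖) ^ 2 := by
      rw [norm_sub_sq_real, real_inner_smul_right, norm_smul, Real.norm_eq_abs,
        abs_of_pos (by positivity)]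
    have hQ : (‖t‖ ^ 2 - 2 * ((1 - k ^ 2)⁻¹ * (inner ℝ t x : ℝ))
          + ((1 - k ^ 2)⁻¹ * ‖x‖) ^ 2) * (1 - k ^ 2) ^ 2
        = (1 - k ^ 2) ^ 2 * ‖t‖ ^ 2 - 2 * (1 - k ^ 2) * (inner ℝ t x : ℝ) + ‖x‖ ^ 2 := by
      field_simp
    constructor
    · intro hle
      have hsq : ‖t - x‖ ^ 2 ≤ (k * ‖t‖) ^ 2 :=
        pow_le_pow_left₀ (norm_nonneg _) hle 2
      have goal2 : ‖t - (1 - k ^ 2)⁻¹ • x‖ ^ 2 ≤ (k * ‖x‖ / (1 - k ^ 2)) ^ 2 := by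
        rw [e1] at hsq
        rw [e2, div_pow, le_div_iff₀ (by positivity), hQ]
        nlinarith [mul_le_mul_of_nonneg_left hsq hk2.le]
      have h1 : (0:ℝ) ≤ k * ‖x‖ / (1 - k ^ 2) := by positivity
      nlinarith [norm_nonneg (t - (1 - k ^ 2)⁻¹ • x), goal2]
    · intro hle
      have hsq : ‖t - (1 - k ^ 2)⁻¹ • x‖ ^ 2 ≤ (k * ‖x‖ / (1 - k ^ 2)) ^ 2 :=
        pow_le_pow_left₀ (norm_nonneg _) hle 2
      have goal2 : ‖t - x‖ ^ 2 ≤ (k * ‖t‖) ^ 2 := by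
        rw [e2, div_pow, le_div_iff₀ (by positivity), hQ] at hsq
        rw [e1]
        nlinarith [hsq, hk2, mul_pos hk2 hk2]
      have h1 : (0:ℝ) ≤ k * ‖t‖ := by positivity
      nlinarith [norm_nonneg (t - x), goal2]
  ext t
  simp only [Set.mem_inter_iff, Set.mem_setOf_eq]
  constructor
  · rintro ⟨h1, _⟩; exact (key t).mp h1
  · intro ht; exact ⟨(key t).mpr ht, hsub.mpr h ht⟩
end

section
/- Let 0 < k < 1, R_s > 0 and x ∈ ℝ². The hotspot disk closedBall(x, R_s) is contained in the Apollonius disk closedBall((1−k²)⁻¹ • x, k‖x‖/(1−k²)) if and only if k‖x‖ ≥ (1+k)R_s. In particular, in this regime the SBS association region S(x,k) = {t : ‖t − x‖ ≤ k‖t‖} satisfies S(x,k) ∩ closedBall(x,R_s) = closedBall(x, R_s). -/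
open Metric

/-- **Proposition 1, third case (sharp threshold).** For `0 < k < 1`, `R_s > 0`, `x ∈ ℝ²`,
the hotspot disk `closedBall(x, R_s)` is contained in the Apollonius disk
`closedBall((1−k²)⁻¹ • x, k‖x‖/(1−k²))` iff `k‖x‖ ≥ (1+k)R_s`; and in this regime the SBS
association region intersected with the hotspot equals the whole hotspot disk. -/
theorem hotspot_subset_apollonius_iff
    (k R_s : ℝ) (hk0 : 0 < k) (hk1 : k < 1) (hR : 0 < R_s)
    (x : EuclideanSpace ℝ (Fin 2)) :
    (closedBall x R_s ⊆ closedBall ((1 - k ^ 2)⁻¹ • x) (k * ‖x‖ / (1 - k ^ 2)) ↔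
      (1 + k) * R_s ≤ k * ‖x‖) ∧
    ((1 + k) * R_s ≤ k * ‖x‖ →
      {t : EuclideanSpace ℝ (Fin 2) | ‖t - x‖ ≤ k * ‖t‖} ∩ closedBall x R_s =
        closedBall x R_s) := by
  have hk2 : (0:ℝ) < 1 - k ^ 2 := by nlinarith
  constructor
  · constructor
    · intro hsub
      by_cases hx : x = 0
      · subst hx
        exfalso
        have hmem : (EuclideanSpace.single 0 R_s : EuclideanSpace ℝ (Fin 2)) ∈
            closedBall (0 : EuclideanSpace ℝ (Fin 2)) R_s := by
          simp [mem_closedBall, dist_eq_norm, EuclideanSpace.norm_single, abs_of_pos hR]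
        have h2 := hsub hmem
        simp [mem_closedBall, dist_eq_norm] at h2
        have h3 := congrArg norm h2
        simp [EuclideanSpace.norm_single] at h3
        linarith
      · have hxn : 0 < ‖x‖ := norm_pos_iff.mpr hx
        set t : EuclideanSpace ℝ (Fin 2) := (1 - R_s / ‖x‖) • x with ht
        have hmem : t ∈ closedBall x R_s := by
          rw [mem_closedBall, dist_eq_norm, ht]
          have : (1 - R_s / ‖x‖) • x - x = (-(R_s / ‖x‖)) • x := by
            module
          rw [this, norm_smul]
          rw [Real.norm_eq_abs, abs_neg, abs_of_pos (by positivity)]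
          rw [div_mul_cancel₀ _ (ne_of_gt hxn)]
        have h2 := hsub hmem
        rw [mem_closedBall, dist_eq_norm, ht] at h2
        have heq : (1 - R_s / ‖x‖) • x - (1 - k ^ 2)⁻¹ • x
            = (1 - R_s / ‖x‖ - (1 - k ^ 2)⁻¹) • x := by
          rw [← sub_smul]
        rw [heq, norm_smul, Real.norm_eq_abs] at h2
        have hcoef : 1 - R_s / ‖x‖ - (1 - k ^ 2)⁻¹ < 0 := by
          have h1 : (1:ℝ) < (1 - k ^ 2)⁻¹ := by
            rw [lt_inv_comm₀ (by norm_num) hk2]; nlinarith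
          have : 0 < R_s / ‖x‖ := by positivity
          linarith
        rw [abs_of_neg hcoef] at h2
        have h3 : (-(1 - R_s / ‖x‖ - (1 - k ^ 2)⁻¹)) * ‖x‖
            = R_s + (1 - k ^ 2)⁻¹ * ‖x‖ - ‖x‖ := by
          field_simp
          ring
        rw [h3] at h2
        have h4 : (1 - k ^ 2)⁻¹ * ‖x‖ * (1 - k ^ 2) = ‖x‖ := by
          field_simp
        rw [le_div_iff₀ hk2] at h2
        nlinarith [h2, h4, hk2, norm_nonneg x, (by linarith : (0:ℝ) < 1 - k), mul_pos hxn hk2]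
    · intro hle
      apply closedBall_subset_closedBall'
      have heq : x - (1 - k ^ 2)⁻¹ • x = (1 - (1 - k ^ 2)⁻¹) • x := by
        nth_rewrite 1 [← one_smul ℝ x]
        rw [← sub_smul]
      rw [dist_eq_norm, heq, norm_smul, Real.norm_eq_abs]
      have h1 : (1:ℝ) ≤ (1 - k ^ 2)⁻¹ := by
        rw [le_inv_comm₀ (by norm_num) hk2]; nlinarith
      rw [abs_of_nonpos (by linarith)]
      rw [le_div_iff₀ hk2]
      have h4 : (1 - k ^ 2)⁻¹ * (1 - k ^ 2) = 1 := by field_simp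
      have hxn : 0 ≤ ‖x‖ := norm_nonneg x
      nlinarith [mul_le_mul_of_nonneg_right hle (by linarith : (0:ℝ) ≤ 1 - k), mul_nonneg hxn hk2.le]
  · intro hle
    apply Set.inter_eq_right.mpr
    intro t ht
    rw [mem_closedBall, dist_eq_norm] at ht
    have h1 : ‖x‖ - ‖t‖ ≤ ‖t - x‖ := by
      have := norm_sub_norm_le (x) (t)
      have h2 : ‖x - t‖ = ‖t - x‖ := norm_sub_rev x t
      linarith
    show ‖t - x‖ ≤ k * ‖t‖
    nlinarith [norm_nonneg (t - x)]
end

section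
/- Let 0 < k < 1, R_s > 0 and x ∈ ℝ² with 0 < k‖x‖ ≤ (1−k)R_s. If U is a random point uniformly distributed on the closed disk closedBall(x, R_s) ⊂ ℝ², then the SBS association probability satisfies P(‖U − x‖ ≤ k‖U‖) = k²‖x‖² / ((1−k²)² R_s²). -/
open Metric MeasureTheory

/-- **Lemma 1, first case.** For `0 < k < 1`, `R_s > 0` and `x ∈ ℝ²` with
`0 < k‖x‖ ≤ (1−k)R_s`, a point `U` uniformly distributed on `closedBall(x, R_s)`
associates to the SBS (`‖U − x‖ ≤ k‖U‖`) with probability `k²‖x‖²/((1−k²)²R_s²)`. -/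
theorem sbs_association_probability_near
    (k R_s : ℝ) (hk0 : 0 < k) (hk1 : k < 1) (hR : 0 < R_s)
    (x : EuclideanSpace ℝ (Fin 2))
    (hx0 : 0 < k * ‖x‖) (hx : k * ‖x‖ ≤ (1 - k) * R_s) :
    ((volume (closedBall x R_s))⁻¹ • volume.restrict (closedBall x R_s))
        {t : EuclideanSpace ℝ (Fin 2) | ‖t - x‖ ≤ k * ‖t‖} =
      ENNReal.ofReal (k ^ 2 * ‖x‖ ^ 2 / ((1 - k ^ 2) ^ 2 * R_s ^ 2)) := by
  have hu : (0:ℝ) < 1 - k^2 := by nlinarith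
  set c : EuclideanSpace ℝ (Fin 2) := (1 - k^2)⁻¹ • x with hc
  set r : ℝ := k * ‖x‖ / (1 - k^2) with hrdef
  have hr : 0 < r := by positivity
  -- the association region is the Apollonius disk
  have hset : {t : EuclideanSpace ℝ (Fin 2) | ‖t - x‖ ≤ k * ‖t‖} = closedBall c r := by
    ext t
    rw [Set.mem_setOf_eq, mem_closedBall, dist_eq_norm,
      show (‖t - x‖ ≤ k * ‖t‖) ↔ ‖t - x‖^2 ≤ (k * ‖t‖)^2 from
        (pow_le_pow_iff_left₀ (norm_nonneg _) (by positivity) (by norm_num)).symm,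
      show (‖t - c‖ ≤ r) ↔ ‖t - c‖^2 ≤ r^2 from
        (pow_le_pow_iff_left₀ (norm_nonneg _) hr.le (by norm_num)).symm,
      norm_sub_sq_real, norm_sub_sq_real, hc, hrdef, real_inner_smul_right, norm_smul]
    have hns : ‖(1 - k^2)⁻¹‖ = (1 - k^2)⁻¹ := by
      rw [Real.norm_eq_abs, abs_of_pos (by positivity)]
    rw [hns, div_pow, mul_pow, mul_pow, inv_pow]
    have e1' : (1-k^2)⁻¹ * (inner ℝ t x:ℝ) * (1-k^2)^2 = (1-k^2)*(inner ℝ t x:ℝ) := by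
      field_simp
    have e2' : ((1-k^2)^2)⁻¹ * ‖x‖^2 * (1-k^2)^2 = ‖x‖^2 := by field_simp
    constructor
    · intro h
      have hP : (1-k^2)*‖t‖^2 - 2*(inner ℝ t x:ℝ) + ‖x‖^2 ≤ 0 := by nlinarith
      rw [le_div_iff₀ (by positivity)]
      nlinarith [e1', e2', hP, hu]
    · intro h
      rw [le_div_iff₀ (by positivity)] at h
      have hP : (1-k^2)*‖t‖^2 - 2*(inner ℝ t x:ℝ) + ‖x‖^2 ≤ 0 := by
        nlinarith [e1', e2', h, hu]
      nlinarith [hP]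
  -- the Apollonius disk is contained in the hotspot
  have hdist : dist c x = k^2 * ‖x‖ / (1 - k^2) := by
    rw [dist_eq_norm, hc,
      show (1 - k^2)⁻¹ • x - x = ((1 - k^2)⁻¹ - 1) • x by rw [sub_smul, one_smul],
      norm_smul, Real.norm_eq_abs]
    have : (1 - k^2)⁻¹ - 1 = k^2 / (1 - k^2) := by field_simp; ring
    rw [this, abs_of_pos (by positivity)]
    ring
  have hsub : closedBall c r ⊆ closedBall x R_s := by
    apply closedBall_subset_closedBall'
    rw [hdist, hrdef]
    have h1k : (0:ℝ) < 1 - k := by linarith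
    rw [← add_div, div_le_iff₀ hu]
    have : k * ‖x‖ + k^2 * ‖x‖ = (1 + k) * (k * ‖x‖) := by ring
    rw [this]
    calc (1 + k) * (k * ‖x‖) ≤ (1 + k) * ((1 - k) * R_s) := by
          apply mul_le_mul_of_nonneg_left hx (by linarith)
      _ = R_s * (1 - k^2) := by ring
  -- volumes of the two disks
  have hVpos : (0:ENNReal) < volume (ball (0 : EuclideanSpace ℝ (Fin 2)) 1) :=
    measure_ball_pos volume _ one_pos
  have hVtop : volume (ball (0 : EuclideanSpace ℝ (Fin 2)) 1) ≠ ⊤ :=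
    measure_ball_lt_top.ne
  have hdim : Module.finrank ℝ (EuclideanSpace ℝ (Fin 2)) = 2 := by simp
  have hvol : ∀ (y : EuclideanSpace ℝ (Fin 2)) (s : ℝ), 0 ≤ s →
      volume (closedBall y s) =
        ENNReal.ofReal (s ^ 2) * volume (ball (0 : EuclideanSpace ℝ (Fin 2)) 1) := by
    intro y s hs
    rw [Measure.addHaar_closedBall volume y hs, hdim]
  rw [Measure.smul_apply, Measure.restrict_apply (by rw [hset]; exact measurableSet_closedBall),
    hset, Set.inter_eq_left.mpr hsub, hvol c r hr.le, hvol x R_s hR.le, smul_eq_mul,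
    ENNReal.mul_inv (Or.inr hVtop) (Or.inr hVpos.ne')]
  have hRs2 : (0:ℝ) < R_s ^ 2 := by positivity
  rw [show (ENNReal.ofReal (R_s ^ 2))⁻¹ *
      (volume (ball (0 : EuclideanSpace ℝ (Fin 2)) 1))⁻¹ *
      (ENNReal.ofReal (r ^ 2) * volume (ball (0 : EuclideanSpace ℝ (Fin 2)) 1)) =
      (ENNReal.ofReal (R_s ^ 2))⁻¹ * ENNReal.ofReal (r ^ 2) *
      ((volume (ball (0 : EuclideanSpace ℝ (Fin 2)) 1))⁻¹ *
        volume (ball (0 : EuclideanSpace ℝ (Fin 2)) 1)) by ring,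
    ENNReal.inv_mul_cancel hVpos.ne' hVtop, mul_one,
    ← ENNReal.ofReal_inv_of_pos hRs2, ← ENNReal.ofReal_mul (by positivity)]
  congr 1
  rw [hrdef]
  field_simp
end

section
/- Let 0 < k < 1, R_s > 0 and x ∈ ℝ² with (1−k)R_s < k‖x‖ < (1+k)R_s, and assume additionally that d² + r₁² > r₂² and d² + r₂² > r₁², where r₁ = R_s, r₂ = k‖x‖/(1−k²) and d = k²‖x‖/(1−k²). If U is a random point uniformly distributed on the closed disk closedBall(x, R_s) ⊂ ℝ², then P(‖U − x‖ ≤ k‖U‖) = C(r₁, r₂, d) / (π R_s²), where C is the circle-intersection area function. -/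
open Metric MeasureTheory Real

set_option maxHeartbeats 1000000

/-- The auxiliary quantity `t(r₁, r₂, d)` of the circle-intersection formula. -/
noncomputable def lensT (r₁ r₂ d : ℝ) : ℝ :=
  Real.sqrt ((d + r₁ + r₂) * (d + r₁ - r₂) * (d - r₁ + r₂) * (-d + r₁ + r₂))

/-- The circle-intersection (lens) area function `C(r₁, r₂, d)`. -/
noncomputable def lensArea (r₁ r₂ d : ℝ) : ℝ :=
  r₁ ^ 2 * Real.arctan (lensT r₁ r₂ d / (d ^ 2 + r₁ ^ 2 - r₂ ^ 2)) +
    r₂ ^ 2 * Real.arctan (lensT r₁ r₂ d / (d ^ 2 - r₁ ^ 2 + r₂ ^ 2)) -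
    lensT r₁ r₂ d / 2

open intervalIntegral in

lemma seg_integral (r a : ℝ) (hr : 0 < r) (ha0 : 0 < a) (har : a < r) :
    ∫ u in a..r, 2 * Real.sqrt (r ^ 2 - u ^ 2)
      = r ^ 2 * Real.arctan (Real.sqrt (r ^ 2 - a ^ 2) / a) - a * Real.sqrt (r ^ 2 - a ^ 2) := by
  have har' : a / r < 1 := (div_lt_one hr).2 har
  have hra0 : 0 < a / r := div_pos ha0 hr
  set α := Real.arcsin (a / r) with hα
  have hsinα : Real.sin α = a / r := Real.sin_arcsin (by linarith) har'.le
  have hcosα : Real.cos α = Real.sqrt (1 - (a / r) ^ 2) := Real.cos_arcsin _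
  have hαmem : α ∈ Set.Icc (-(π/2)) (π/2) := ⟨Real.neg_pi_div_two_le_arcsin _, Real.arcsin_le_pi_div_two _⟩
  have key : ∫ u in a..r, 2 * Real.sqrt (r ^ 2 - u ^ 2)
      = ∫ θ in α..(π/2), 2 * Real.sqrt (r ^ 2 - (r * Real.sin θ) ^ 2) * (r * Real.cos θ) := by
    have := integral_comp_mul_deriv (f := fun θ => r * Real.sin θ) (f' := fun θ => r * Real.cos θ)
      (g := fun u => 2 * Real.sqrt (r ^ 2 - u ^ 2)) (a := α) (b := π/2)
      (fun θ _ => (Real.hasDerivAt_sin θ).const_mul r)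
      (by fun_prop) (by fun_prop)
    have e1 : r * Real.sin α = a := by rw [hsinα]; field_simp
    have e2 : r * Real.sin (π/2) = r := by simp
    simp only [Function.comp, e1, e2] at this
    exact this.symm
  have key2 : ∀ θ ∈ Set.uIcc α (π/2),
      2 * Real.sqrt (r ^ 2 - (r * Real.sin θ) ^ 2) * (r * Real.cos θ) = 2 * r ^ 2 * Real.cos θ ^ 2 := by
    intro θ hθ
    have h1 : α ≤ π / 2 := by
      have := Real.arcsin_le_pi_div_two (a/r); linarith [hαmem.1]
    rw [Set.uIcc_of_le h1] at hθ
    have hcos : 0 ≤ Real.cos θ := Real.cos_nonneg_of_mem_Icc ⟨by linarith [hαmem.1, hθ.1], hθ.2⟩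
    have : r ^ 2 - (r * Real.sin θ) ^ 2 = (r * Real.cos θ) ^ 2 := by
      have := Real.sin_sq_add_cos_sq θ; ring_nf; nlinarith
    rw [this, Real.sqrt_sq (by positivity)]
    ring
  rw [key, intervalIntegral.integral_congr key2]
  have : ∫ θ in α..(π/2), 2 * r ^ 2 * Real.cos θ ^ 2 = 2 * r ^ 2 * ∫ θ in α..(π/2), Real.cos θ ^ 2 := by
    rw [← intervalIntegral.integral_const_mul]
  rw [this, integral_cos_sq]
  rw [Real.cos_pi_div_two, Real.sin_pi_div_two, hsinα, hcosα]
  have hsq : Real.sqrt (1 - (a/r)^2) = Real.sqrt (r^2 - a^2) / r := by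
    rw [show (1 - (a/r)^2) = (r^2 - a^2)/r^2 by field_simp,
      Real.sqrt_div (by nlinarith), Real.sqrt_sq hr.le]
  have harctan : π / 2 - α = Real.arctan (Real.sqrt (r ^ 2 - a ^ 2) / a) := by
    have := Real.arccos_eq_arctan hra0
    rw [Real.arccos, ← hα] at this
    rw [this, hsq]
    congr 1
    field_simp
  rw [hsq]
  rw [← harctan]
  field_simp
  ring


lemma slice_eq (r c : ℝ) (hc : c ^ 2 ≤ r ^ 2) :
    {v : ℝ | c ^ 2 + v ^ 2 ≤ r ^ 2} = Set.Icc (-(Real.sqrt (r^2 - c^2))) (Real.sqrt (r^2 - c^2)) := by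
  ext v
  simp only [Set.mem_setOf_eq, Set.mem_Icc, ← abs_le, ← Real.sqrt_sq_eq_abs,
    Real.sqrt_le_sqrt_iff (by linarith : (0:ℝ) ≤ r^2 - c^2)]
  constructor <;> intro <;> linarith

lemma seg_vol (r a : ℝ) (hr : 0 < r) (ha0 : 0 < a) (har : a < r) :
    volume {p : ℝ × ℝ | a ≤ p.1 ∧ p.1 ^ 2 + p.2 ^ 2 ≤ r ^ 2}
      = ENNReal.ofReal (∫ u in a..r, 2 * Real.sqrt (r ^ 2 - u ^ 2)) := by
  have hmeas : MeasurableSet {p : ℝ × ℝ | a ≤ p.1 ∧ p.1 ^ 2 + p.2 ^ 2 ≤ r ^ 2} := by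
    apply MeasurableSet.inter
    · exact measurableSet_le measurable_const measurable_fst
    · exact measurableSet_le ((measurable_fst.pow_const 2).add (measurable_snd.pow_const 2)) measurable_const
  rw [MeasureTheory.Measure.volume_eq_prod, MeasureTheory.Measure.prod_apply hmeas]
  have hslices : ∀ u : ℝ, volume (Prod.mk u ⁻¹' {p : ℝ × ℝ | a ≤ p.1 ∧ p.1 ^ 2 + p.2 ^ 2 ≤ r ^ 2})
      = Set.indicator (Set.Icc a r) (fun u => ENNReal.ofReal (2 * Real.sqrt (r ^ 2 - u ^ 2))) u := by
    intro u
    by_cases hu : u ∈ Set.Icc a r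
    · have hu2 : u ^ 2 ≤ r ^ 2 := by
        rcases hu with ⟨h1, h2⟩
        nlinarith
      have : Prod.mk u ⁻¹' {p : ℝ × ℝ | a ≤ p.1 ∧ p.1 ^ 2 + p.2 ^ 2 ≤ r ^ 2}
          = Set.Icc (-(Real.sqrt (r^2 - u^2))) (Real.sqrt (r^2 - u^2)) := by
        rw [← slice_eq r u hu2]
        ext v; simp [hu.1]
      rw [this, Set.indicator_of_mem hu, Real.volume_Icc]
      congr 1
      have : (0:ℝ) ≤ Real.sqrt (r^2-u^2) := Real.sqrt_nonneg _
      ring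
    · have : Prod.mk u ⁻¹' {p : ℝ × ℝ | a ≤ p.1 ∧ p.1 ^ 2 + p.2 ^ 2 ≤ r ^ 2} = ∅ := by
        ext v
        simp only [Set.mem_preimage, Set.mem_setOf_eq, Set.mem_empty_iff_false, iff_false]
        rintro ⟨h1, h2⟩
        apply hu
        constructor
        · exact h1
        · nlinarith
      rw [this, Set.indicator_of_notMem hu]
      simp
  rw [lintegral_congr hslices, lintegral_indicator measurableSet_Icc _]
  have hint : IntegrableOn (fun u => 2 * Real.sqrt (r ^ 2 - u ^ 2)) (Set.Icc a r) := by
    apply Continuous.integrableOn_Icc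
    fun_prop
  rw [← MeasureTheory.ofReal_integral_eq_lintegral_ofReal hint
    (Filter.Eventually.of_forall fun u => by positivity)]
  congr 1
  rw [intervalIntegral.integral_of_le har.le, ← MeasureTheory.integral_Icc_eq_integral_Ioc]

lemma seg_meas (r a : ℝ) : MeasurableSet {p : ℝ × ℝ | a ≤ p.1 ∧ p.1 ^ 2 + p.2 ^ 2 ≤ r ^ 2} :=
  (measurableSet_le measurable_const measurable_fst).inter
    (measurableSet_le ((measurable_fst.pow_const 2).add (measurable_snd.pow_const 2))
      measurable_const)

lemma left_seg_vol (r e m : ℝ) (hr : 0 < r) (h0 : 0 < e - m) (hlt : e - m < r) :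
    volume {p : ℝ × ℝ | p.1 ≤ m ∧ (p.1 - e) ^ 2 + p.2 ^ 2 ≤ r ^ 2}
      = ENNReal.ofReal (∫ u in (e - m)..r, 2 * Real.sqrt (r ^ 2 - u ^ 2)) := by
  have hψ : MeasurePreserving (Prod.map (fun u : ℝ => e - u) (id : ℝ → ℝ))
      (volume : Measure (ℝ × ℝ)) (volume : Measure (ℝ × ℝ)) := by
    rw [MeasureTheory.Measure.volume_eq_prod]
    exact (Measure.measurePreserving_sub_left volume e).prod (MeasurePreserving.id volume)
  have hset : {p : ℝ × ℝ | p.1 ≤ m ∧ (p.1 - e) ^ 2 + p.2 ^ 2 ≤ r ^ 2}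
      = Prod.map (fun u : ℝ => e - u) (id : ℝ → ℝ) ⁻¹'
        {p : ℝ × ℝ | (e - m) ≤ p.1 ∧ p.1 ^ 2 + p.2 ^ 2 ≤ r ^ 2} := by
    ext p
    simp only [Set.mem_setOf_eq, Set.mem_preimage, Prod.map, id]
    constructor
    · rintro ⟨h1, h2⟩; exact ⟨by linarith, by nlinarith⟩
    · rintro ⟨h1, h2⟩; exact ⟨by linarith, by nlinarith⟩
  rw [hset, hψ.measure_preimage (seg_meas r (e - m)).nullMeasurableSet,
    seg_vol r (e - m) hr h0 hlt]

lemma left_seg_meas (r e m : ℝ) :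
    MeasurableSet {p : ℝ × ℝ | p.1 ≤ m ∧ (p.1 - e) ^ 2 + p.2 ^ 2 ≤ r ^ 2} :=
  (measurableSet_le measurable_fst measurable_const).inter
    (measurableSet_le (((measurable_fst.sub measurable_const).pow_const 2).add
      (measurable_snd.pow_const 2)) measurable_const)

lemma lens_vol (r₁ r₂ d : ℝ) (hr₁ : 0 < r₁) (hr₂ : 0 < r₂) (hd : 0 < d)
    (h1 : r₂ ^ 2 < d ^ 2 + r₁ ^ 2) (h2 : r₁ ^ 2 < d ^ 2 + r₂ ^ 2) (htri : d < r₁ + r₂) :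
    volume {p : ℝ × ℝ | p.1 ^ 2 + p.2 ^ 2 ≤ r₁ ^ 2 ∧ (p.1 - d) ^ 2 + p.2 ^ 2 ≤ r₂ ^ 2}
      = ENNReal.ofReal (lensArea r₁ r₂ d) := by
  set u₀ : ℝ := (d ^ 2 + r₁ ^ 2 - r₂ ^ 2) / (2 * d) with hu₀def
  have h2d : 0 < 2 * d := by linarith
  have hu0 : 0 < u₀ := div_pos (by linarith) h2d
  have hud : u₀ < d := by rw [hu₀def, div_lt_iff₀ h2d]; nlinarith
  have hd1 : r₁ - r₂ < d := by nlinarith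
  have hd2 : r₂ - r₁ < d := by nlinarith
  have hur : u₀ < r₁ := by rw [hu₀def, div_lt_iff₀ h2d]; nlinarith
  have hdur : d - u₀ < r₂ := by
    rw [hu₀def, sub_lt_iff_lt_add, ← sub_lt_iff_lt_add', lt_div_iff₀ h2d]; nlinarith
  have hdu0 : 0 < d - u₀ := by linarith
  -- decomposition
  have hAB : {p : ℝ × ℝ | p.1 ^ 2 + p.2 ^ 2 ≤ r₁ ^ 2 ∧ (p.1 - d) ^ 2 + p.2 ^ 2 ≤ r₂ ^ 2}
      = {p : ℝ × ℝ | u₀ ≤ p.1 ∧ p.1 ^ 2 + p.2 ^ 2 ≤ r₁ ^ 2}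
        ∪ {p : ℝ × ℝ | p.1 ≤ u₀ ∧ (p.1 - d) ^ 2 + p.2 ^ 2 ≤ r₂ ^ 2} := by
    have h2du : 2 * d * u₀ = d ^ 2 + r₁ ^ 2 - r₂ ^ 2 := by
      rw [hu₀def]; field_simp
    ext p
    simp only [Set.mem_setOf_eq, Set.mem_union]
    constructor
    · rintro ⟨ha, hb⟩
      rcases le_total u₀ p.1 with h | h
      · exact Or.inl ⟨h, ha⟩
      · exact Or.inr ⟨h, hb⟩
    · rintro (⟨h, ha⟩ | ⟨h, hb⟩)
      · exact ⟨ha, by nlinarith⟩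
      · exact ⟨by nlinarith, hb⟩
  rw [hAB]
  have hnull : volume ({p : ℝ × ℝ | u₀ ≤ p.1 ∧ p.1 ^ 2 + p.2 ^ 2 ≤ r₁ ^ 2}
      ∩ {p : ℝ × ℝ | p.1 ≤ u₀ ∧ (p.1 - d) ^ 2 + p.2 ^ 2 ≤ r₂ ^ 2}) = 0 := by
    have hz : volume {p : ℝ × ℝ | p.1 = u₀} = 0 := by
      have : {p : ℝ × ℝ | p.1 = u₀} = ({u₀} : Set ℝ) ×ˢ (Set.univ : Set ℝ) := by
        ext p
        simp only [Set.mem_prod, Set.mem_singleton_iff, Set.mem_univ, and_true,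
          Set.mem_setOf_eq]
      rw [this, MeasureTheory.Measure.volume_eq_prod, MeasureTheory.Measure.prod_prod]
      simp
    exact measure_mono_null (fun p hp => le_antisymm hp.2.1 hp.1.1) hz
  rw [measure_union₀ (left_seg_meas r₂ d u₀).nullMeasurableSet hnull]
  rw [seg_vol r₁ u₀ hr₁ hu0 hur, left_seg_vol r₂ d u₀ hr₂ hdu0 hdur]
  have hI₁ : (0:ℝ) ≤ ∫ u in u₀..r₁, 2 * Real.sqrt (r₁ ^ 2 - u ^ 2) :=
    intervalIntegral.integral_nonneg hur.le (fun u _ => by positivity)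
  have hI₂ : (0:ℝ) ≤ ∫ u in (d - u₀)..r₂, 2 * Real.sqrt (r₂ ^ 2 - u ^ 2) :=
    intervalIntegral.integral_nonneg hdur.le (fun u _ => by positivity)
  rw [← ENNReal.ofReal_add hI₁ hI₂]
  congr 1
  rw [seg_integral r₁ u₀ hr₁ hu0 hur, seg_integral r₂ (d - u₀) hr₂ hdu0 hdur]
  -- now pure algebra
  set P : ℝ := (d + r₁ + r₂) * (d + r₁ - r₂) * (d - r₁ + r₂) * (-d + r₁ + r₂) with hP
  have hPpos : 0 < P := by
    apply mul_pos (mul_pos (mul_pos (by linarith) (by linarith)) (by linarith)); linarith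
  have ht : lensT r₁ r₂ d = Real.sqrt P := rfl
  have htnn : 0 ≤ lensT r₁ r₂ d := Real.sqrt_nonneg _
  have ht2 : lensT r₁ r₂ d ^ 2 = P := Real.sq_sqrt hPpos.le
  have hs1 : Real.sqrt (r₁ ^ 2 - u₀ ^ 2) = lensT r₁ r₂ d / (2 * d) := by
    rw [ht, show r₁ ^ 2 - u₀ ^ 2 = P / (2 * d) ^ 2 by rw [hu₀def, hP]; field_simp; ring,
      Real.sqrt_div hPpos.le, Real.sqrt_sq h2d.le]
  have hs2 : Real.sqrt (r₂ ^ 2 - (d - u₀) ^ 2) = lensT r₁ r₂ d / (2 * d) := by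
    rw [ht, show r₂ ^ 2 - (d - u₀) ^ 2 = P / (2 * d) ^ 2 by rw [hu₀def, hP]; field_simp; ring,
      Real.sqrt_div hPpos.le, Real.sqrt_sq h2d.le]
  rw [hs1, hs2, lensArea, ht]
  have ha1 : Real.sqrt P / (2 * d) / u₀ = Real.sqrt P / (d ^ 2 + r₁ ^ 2 - r₂ ^ 2) := by
    rw [hu₀def]; field_simp
  have ha2 : Real.sqrt P / (2 * d) / (d - u₀) = Real.sqrt P / (d ^ 2 - r₁ ^ 2 + r₂ ^ 2) := by
    have hz : d ^ 2 - r₁ ^ 2 + r₂ ^ 2 ≠ 0 := by nlinarith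
    rw [hu₀def]
    rw [show d - (d ^ 2 + r₁ ^ 2 - r₂ ^ 2) / (2 * d) = (d ^ 2 - r₁ ^ 2 + r₂ ^ 2) / (2 * d) by
      field_simp; ring]
    rw [div_div, mul_div_cancel₀ _ h2d.ne']
  rw [ha1, ha2]
  field_simp
  ring

/-- **Lemma 1, second (lens) case.** For `0 < k < 1`, `R_s > 0` and `x ∈ ℝ²` with
`(1−k)R_s < k‖x‖ < (1+k)R_s` (and the arctan-validity conditions `d² + r₁² > r₂²`,
`d² + r₂² > r₁²` for `r₁ = R_s`, `r₂ = k‖x‖/(1−k²)`, `d = k²‖x‖/(1−k²)`), a point `U`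
uniformly distributed on `closedBall(x, R_s)` associates to the SBS with probability
`C(r₁, r₂, d)/(π R_s²)`. -/
theorem sbs_association_probability_lens
    (k R_s : ℝ) (hk0 : 0 < k) (hk1 : k < 1) (hR : 0 < R_s)
    (x : EuclideanSpace ℝ (Fin 2))
    (hlow : (1 - k) * R_s < k * ‖x‖) (hhigh : k * ‖x‖ < (1 + k) * R_s)
    (h₁ : (k ^ 2 * ‖x‖ / (1 - k ^ 2)) ^ 2 + R_s ^ 2 > (k * ‖x‖ / (1 - k ^ 2)) ^ 2)
    (h₂ : (k ^ 2 * ‖x‖ / (1 - k ^ 2)) ^ 2 + (k * ‖x‖ / (1 - k ^ 2)) ^ 2 > R_s ^ 2) :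
    ((volume (closedBall x R_s))⁻¹ • volume.restrict (closedBall x R_s))
        {t : EuclideanSpace ℝ (Fin 2) | ‖t - x‖ ≤ k * ‖t‖} =
      ENNReal.ofReal
        (lensArea R_s (k * ‖x‖ / (1 - k ^ 2)) (k ^ 2 * ‖x‖ / (1 - k ^ 2)) /
          (π * R_s ^ 2)) := by
  have hk2 : (0:ℝ) < 1 - k ^ 2 := by nlinarith
  have hX : (0:ℝ) < ‖x‖ := by
    by_contra h
    push_neg at h
    have : ‖x‖ = 0 := le_antisymm h (norm_nonneg x)
    rw [this] at hlow
    nlinarith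
  set X : ℝ := ‖x‖ with hXdef
  set r₂ : ℝ := k * X / (1 - k ^ 2) with hr₂def
  set dd : ℝ := k ^ 2 * X / (1 - k ^ 2) with hdddef
  have hr₂pos : 0 < r₂ := by positivity
  have hddpos : 0 < dd := by positivity
  set c : EuclideanSpace ℝ (Fin 2) := (1 - k ^ 2)⁻¹ • x with hcdef
  -- Step 1: Apollonius
  have hApo : {t : EuclideanSpace ℝ (Fin 2) | ‖t - x‖ ≤ k * ‖t‖} = closedBall c r₂ := by
    ext t
    simp only [Set.mem_setOf_eq, mem_closedBall, dist_eq_norm]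
    have hid : ‖t - x‖ ^ 2 - (k * ‖t‖) ^ 2 = (1 - k ^ 2) * (‖t - c‖ ^ 2 - r₂ ^ 2) := by
      have e1 : ‖t - x‖ ^ 2 = ‖t‖ ^ 2 - 2 * inner ℝ t x + ‖x‖ ^ 2 :=
        norm_sub_sq_real t x
      have e2 : ‖t - c‖ ^ 2 = ‖t‖ ^ 2 - 2 * inner ℝ t c + ‖c‖ ^ 2 :=
        norm_sub_sq_real t c
      have e3 : (inner ℝ t c : ℝ) = (1 - k ^ 2)⁻¹ * inner ℝ t x := by
        rw [hcdef, real_inner_smul_right]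
      have e4 : ‖c‖ = (1 - k ^ 2)⁻¹ * X := by
        rw [hcdef, norm_smul, Real.norm_eq_abs, abs_of_pos (by positivity)]
      rw [e1, e2, e3, e4, hr₂def]
      field_simp
      ring
    constructor
    · intro h
      have h2 : ‖t - x‖ ^ 2 ≤ (k * ‖t‖) ^ 2 := by
        have := norm_nonneg (t - x); nlinarith
      have h3 : ‖t - c‖ ^ 2 ≤ r₂ ^ 2 := by nlinarith
      have := norm_nonneg (t - c); nlinarith
    · intro h
      have h3 : ‖t - c‖ ^ 2 ≤ r₂ ^ 2 := by
        have := norm_nonneg (t - c); nlinarith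
      have h2 : ‖t - x‖ ^ 2 ≤ (k * ‖t‖) ^ 2 := by nlinarith
      have hkt : (0:ℝ) ≤ k * ‖t‖ := by positivity
      have := norm_nonneg (t - x); nlinarith
  rw [hApo, Measure.smul_apply, Measure.restrict_apply measurableSet_closedBall, smul_eq_mul]
  -- Step 2: choose adapted orthonormal basis
  obtain ⟨b, hb⟩ := Orthonormal.exists_orthonormalBasis_extension_of_card_eq
    (𝕜 := ℝ) (E := EuclideanSpace ℝ (Fin 2))
    (ι := Fin 2) (by simp [finrank_euclideanSpace]) (v := fun _ => ‖x‖⁻¹ • x)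
    (s := {0})
    (by
      constructor
      · rintro ⟨i, hi⟩
        simp only [Set.restrict_apply, norm_smul, Real.norm_eq_abs,
          abs_of_pos (inv_pos.2 hX)]
        field_simp
        have hx' : (0:ℝ) < ‖x‖ := hX
        rw [abs_of_pos (one_div_pos.2 hx'), mul_one_div_cancel hx'.ne']
      · rintro ⟨i, hi⟩ ⟨j, hj⟩ hij
        simp only [Set.mem_singleton_iff] at hi hj
        exact absurd (Subtype.ext (hi.trans hj.symm)) hij)
  have hb0 : b 0 = ‖x‖⁻¹ • x := hb 0 rfl
  have hbx : ∀ i, b.repr x i = if i = 0 then X else 0 := by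
    intro i
    have hxb : x = X • b 0 := by
      rw [hb0, smul_smul, mul_inv_cancel₀ hX.ne', one_smul]
    rw [OrthonormalBasis.repr_apply_apply, hxb, real_inner_smul_right]
    rcases b.orthonormal with ⟨hnorm, horth⟩
    by_cases hi : i = 0
    · subst hi
      simp only [if_pos rfl]
      rw [real_inner_self_eq_norm_sq, hnorm 0]
      simp
    · rw [if_neg hi, horth hi, mul_zero]
  have hnormsq : ∀ z : EuclideanSpace ℝ (Fin 2),
      ‖z‖ ^ 2 = (b.repr z 0) ^ 2 + (b.repr z 1) ^ 2 := by
    intro z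
    rw [← b.repr.norm_map z, EuclideanSpace.norm_eq, Real.sq_sqrt (by positivity)]
    simp [Fin.sum_univ_two, Real.norm_eq_abs, sq_abs]
  have hXdd : (1 - k ^ 2)⁻¹ * X = X + dd := by
    rw [hdddef]; field_simp; ring
  have hbc : ∀ i, b.repr c i = if i = 0 then X + dd else 0 := by
    intro i
    have : b.repr c = (1 - k ^ 2)⁻¹ • b.repr x := by
      rw [hcdef, _root_.map_smul]
    rw [this]
    by_cases hi : i = 0
    · subst hi
      simp only [if_pos rfl, PiLp.smul_apply, smul_eq_mul, hbx]
      simpa using hXdd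
    · simp only [if_neg hi, PiLp.smul_apply, smul_eq_mul, hbx, if_neg hi, mul_zero]
  have hsq_iff : ∀ (v : EuclideanSpace ℝ (Fin 2)) (r : ℝ), 0 ≤ r →
      (‖v‖ ≤ r ↔ ‖v‖ ^ 2 ≤ r ^ 2) := by
    intro v r hr
    constructor <;> intro h <;> nlinarith [norm_nonneg v]
  -- the lens set in ℝ × ℝ
  set L : Set (ℝ × ℝ) :=
    {p : ℝ × ℝ | p.1 ^ 2 + p.2 ^ 2 ≤ R_s ^ 2 ∧ (p.1 - dd) ^ 2 + p.2 ^ 2 ≤ r₂ ^ 2} with hLdef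
  have hLmeas : MeasurableSet L := by
    apply MeasurableSet.inter
    · exact measurableSet_le ((measurable_fst.pow_const 2).add (measurable_snd.pow_const 2))
        measurable_const
    · exact measurableSet_le (((measurable_fst.sub measurable_const).pow_const 2).add
        (measurable_snd.pow_const 2)) measurable_const
  set Φ : EuclideanSpace ℝ (Fin 2) → ℝ × ℝ := fun y => (b.repr y 0 - X, b.repr y 1) with hΦdef
  have hmp4 : MeasurePreserving (fun q : ℝ × ℝ => (q.1 - X, q.2)) volume volume := by
    have h1 : MeasurePreserving (Prod.map (fun u : ℝ => u - X) (id : ℝ → ℝ))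
        (volume : Measure (ℝ × ℝ)) (volume : Measure (ℝ × ℝ)) := by
      rw [MeasureTheory.Measure.volume_eq_prod]
      exact (measurePreserving_sub_right volume X).prod (MeasurePreserving.id volume)
    convert h1 using 1
    funext q; rfl
  have hΦmp : MeasurePreserving Φ volume volume := by
    have hchain := hmp4.comp ((volume_preserving_finTwoArrow ℝ).comp
      ((EuclideanSpace.volume_preserving_symm_measurableEquiv_toLp (Fin 2)).comp
        b.measurePreserving_repr))
    have : ((fun q : ℝ × ℝ => (q.1 - X, q.2)) ∘ ⇑(MeasurableEquiv.finTwoArrow) ∘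
        ⇑(MeasurableEquiv.toLp 2 (Fin 2 → ℝ)).symm ∘ ⇑b.repr) = Φ := by
      funext y
      simp [hΦdef, MeasurableEquiv.finTwoArrow, MeasurableEquiv.toLp]
      exact ⟨rfl, rfl⟩
    rwa [this] at hchain
  have hpre : closedBall c r₂ ∩ closedBall x R_s = Φ ⁻¹' L := by
    ext y
    simp only [Set.mem_inter_iff, mem_closedBall, dist_eq_norm, Set.mem_preimage, hLdef,
      Set.mem_setOf_eq, hΦdef]
    have ex : ‖y - x‖ ^ 2 = (b.repr y 0 - X) ^ 2 + (b.repr y 1) ^ 2 := by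
      rw [hnormsq (y - x), map_sub]
      simp only [PiLp.sub_apply, hbx]
      norm_num
    have ec : ‖y - c‖ ^ 2 = ((b.repr y 0 - X) - dd) ^ 2 + (b.repr y 1) ^ 2 := by
      rw [hnormsq (y - c), map_sub]
      simp only [PiLp.sub_apply, hbc]
      norm_num
      ring
    rw [hsq_iff (y - c) r₂ hr₂pos.le, hsq_iff (y - x) R_s hR.le, ex, ec]
    tauto
  rw [hpre, hΦmp.measure_preimage hLmeas.nullMeasurableSet]
  have h1' : r₂ ^ 2 < dd ^ 2 + R_s ^ 2 := by rw [hr₂def, hdddef]; exact h₁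
  have h2' : R_s ^ 2 < dd ^ 2 + r₂ ^ 2 := by rw [hr₂def, hdddef]; exact h₂
  have htri : dd < R_s + r₂ := by
    have : dd = k * r₂ := by rw [hdddef, hr₂def]; ring
    nlinarith
  rw [hLdef, lens_vol R_s r₂ dd hR hr₂pos hddpos h1' h2' htri]
  have hvol : volume (closedBall x R_s) = ENNReal.ofReal (π * R_s ^ 2) := by
    rw [EuclideanSpace.volume_closedBall]
    simp only [Fintype.card_fin]
    rw [show ((2:ℕ):ℝ) / 2 + 1 = 2 by norm_num, Real.Gamma_two]
    rw [Real.sq_sqrt Real.pi_pos.le, div_one, ← ENNReal.ofReal_pow hR.le,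
      ← ENNReal.ofReal_mul (by positivity)]
    rw [mul_comm]
  rw [hvol, ENNReal.ofReal_div_of_pos (by positivity), ENNReal.div_eq_inv_mul]
end

section
/- Let 0 < k < 1, x ∈ ℝ² with x ≠ 0, let e ∈ ℝ² be a unit vector, and write c = ⟪x, e⟫/‖x‖ (the cosine of the angle between e and x). Then for every real u > 0: ‖u • e‖ ≤ k‖x + u • e‖ if and only if u ≤ ‖x‖·k·(√(1 − k²(1 − c²)) + k c)/(1 − k²). -/
open scoped RealInnerProductSpace

set_option maxHeartbeats 1000000 in
/-- **Radial characterization of the SBS association region** (proofs of Lemma 1 and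
Theorem 1). For `0 < k < 1`, `x ≠ 0`, a unit vector `e` and `c = ⟪x, e⟫/‖x‖`, a point at
offset `u > 0` in direction `e` from `x` satisfies `‖u • e‖ ≤ k‖x + u • e‖` iff
`u ≤ ‖x‖ k (√(1 − k²(1 − c²)) + k c)/(1 − k²)`. -/
theorem sbs_association_radial_characterization
    (k : ℝ) (hk0 : 0 < k) (hk1 : k < 1)
    (x e : EuclideanSpace ℝ (Fin 2)) (hx : x ≠ 0) (he : ‖e‖ = 1) :
    ∀ u : ℝ, 0 < u →
      (‖u • e‖ ≤ k * ‖x + u • e‖ ↔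
        u ≤ ‖x‖ * k * (Real.sqrt (1 - k ^ 2 * (1 - (⟪x, e⟫ / ‖x‖) ^ 2)) +
            k * (⟪x, e⟫ / ‖x‖)) / (1 - k ^ 2)) := by
  intro u hu
  set n := ‖x‖ with hn
  set t := (⟪x, e⟫ : ℝ) with htdef
  have hn0 : 0 < n := norm_pos_iff.mpr hx
  have ht : |t| ≤ n := by
    have := abs_real_inner_le_norm x e
    simpa only [he, mul_one] using this
  have ht2 : t ^ 2 ≤ n ^ 2 := by nlinarith [sq_abs t, sq_le_sq' (neg_le_of_abs_le ht) (le_of_abs_le ht)]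
  have hk2 : 0 < 1 - k ^ 2 := by nlinarith
  have hlhs : ‖u • e‖ = u := by
    rw [norm_smul, he, mul_one, Real.norm_eq_abs, abs_of_pos hu]
  have hexp : ‖x + u • e‖ ^ 2 = n ^ 2 + 2 * u * t + u ^ 2 := by
    rw [norm_add_sq_real, real_inner_smul_right, norm_smul, he]
    simp [abs_of_pos hu, htdef]
    ring
  have hm0 : 0 ≤ ‖x + u • e‖ := norm_nonneg _
  set m := ‖x + u • e‖ with hmdef
  rw [hlhs]
  have hDnn : 0 ≤ 1 - k ^ 2 * (1 - (t / n) ^ 2) := by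
    have h1 : (t / n) ^ 2 ≤ 1 := by
      rw [div_pow, div_le_one (by positivity)]
      exact ht2
    nlinarith
  set s := Real.sqrt (1 - k ^ 2 * (1 - (t / n) ^ 2)) with hsdef
  have hs0 : 0 ≤ s := Real.sqrt_nonneg _
  have hs2 : s ^ 2 = 1 - k ^ 2 * (1 - (t / n) ^ 2) := Real.sq_sqrt hDnn
  clear_value n t s m
  clear hx he hlhs hmdef hsdef htdef hn x e
  have hns2 : (n * s) ^ 2 = n ^ 2 - k ^ 2 * (n ^ 2 - t ^ 2) := by
    have : n ^ 2 * s ^ 2 = n ^ 2 * (1 - k ^ 2 * (1 - (t / n) ^ 2)) := by rw [hs2]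
    field_simp at this
    nlinarith [this]
  have hX : n * k * (s + k * (t / n)) = k * (n * s) + k ^ 2 * t := by
    field_simp
  have hnorm0 : 0 ≤ k * m := mul_nonneg hk0.le hm0
  have hns0 : 0 ≤ n * s := mul_nonneg hn0.le hs0
  have hkt : k * |t| ≤ n * s := by
    have hsq : (k * |t|) ^ 2 ≤ (n * s) ^ 2 := by
      rw [hns2]; nlinarith [sq_abs t]
    nlinarith [hsq, abs_nonneg t, mul_nonneg hk0.le (abs_nonneg t)]
  have hBt : k ^ 2 * t ≤ k * (n * s) := by
    nlinarith [hkt, le_abs_self t, hk0.le]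
  constructor
  · intro h
    have h2 : u ^ 2 ≤ k ^ 2 * (n ^ 2 + 2 * u * t + u ^ 2) := by
      have := pow_le_pow_left₀ hu.le h 2
      rw [mul_pow, hexp] at this
      linarith
    rw [le_div_iff₀ hk2, hX]
    have hA2 : ((1 - k ^ 2) * u - k ^ 2 * t) ^ 2 ≤ (k * (n * s)) ^ 2 := by
      rw [mul_pow, hns2]; nlinarith [h2]
    have hB0 : 0 ≤ k * (n * s) := mul_nonneg hk0.le hns0
    nlinarith [hA2, hB0]
  · intro h
    rw [le_div_iff₀ hk2, hX] at h
    have key : u ^ 2 ≤ (k * m) ^ 2 := by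
      rw [mul_pow, hexp]
      have hA : -(k * (n * s)) ≤ (1 - k ^ 2) * u - k ^ 2 * t := by nlinarith [hBt, hu, hk2]
      have hA2 : ((1 - k ^ 2) * u - k ^ 2 * t) ^ 2 ≤ (k * (n * s)) ^ 2 := by
        nlinarith [mul_nonneg (by linarith : (0:ℝ) ≤ k * (n * s) - ((1 - k ^ 2) * u - k ^ 2 * t))
          (by linarith : (0:ℝ) ≤ k * (n * s) + ((1 - k ^ 2) * u - k ^ 2 * t))]
      rw [mul_pow, hns2] at hA2
      nlinarith [hA2, hk2]
    exact (pow_le_pow_iff_left₀ hu.le hnorm0 two_ne_zero).mp key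
end

section
/- Let 0 < k < 1, R_s > 0 and x ∈ ℝ² with x ≠ 0. If U is a random point uniformly distributed on the closed disk closedBall(x, R_s) ⊂ ℝ², then P(‖U − x‖ ≤ k‖U‖) = (1/(2π R_s²)) · ∫₀^{2π} ( min( R_s, ‖x‖·k·(√(1 − k² sin²ξ) + k cos ξ)/(1 − k²) ) )² dξ. -/
open Metric MeasureTheory Real
open Set

theorem my_lintegral_polar (g : ℝ × ℝ → ENNReal) :
    ∫⁻ p in polarCoord.target, (ENNReal.ofReal p.1) * g (polarCoord.symm p) = ∫⁻ p, g p := by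
  set B : ℝ × ℝ → ℝ × ℝ →L[ℝ] ℝ × ℝ := fun p =>
    LinearMap.toContinuousLinearMap (Matrix.toLin (Module.Basis.finTwoProd ℝ) (Module.Basis.finTwoProd ℝ)
      !![cos p.2, -p.1 * sin p.2; sin p.2, p.1 * cos p.2])
  have A : ∀ p ∈ polarCoord.target, HasFDerivWithinAt polarCoord.symm (B p) polarCoord.target p :=
    fun p _ => (hasFDerivAt_polarCoord_symm p).hasFDerivWithinAt
  have B_det : ∀ p, (B p).det = p.1 := by
    intro p
    conv_rhs => rw [← one_mul p.1, ← cos_sq_add_sin_sq p.2]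
    simp only [B, neg_mul, LinearMap.det_toContinuousLinearMap, LinearMap.det_toLin,
      Matrix.det_fin_two_of, sub_neg_eq_add]
    ring
  symm
  calc
    ∫⁻ p, g p = ∫⁻ p in polarCoord.source, g p := by
      rw [← setLIntegral_univ]
      exact (setLIntegral_congr polarCoord_source_ae_eq_univ.symm)
    _ = ∫⁻ p in polarCoord.target, ENNReal.ofReal |(B p).det| * g (polarCoord.symm p) := by
      rw [← polarCoord.symm_image_target_eq_source]
      exact lintegral_image_eq_lintegral_abs_det_fderiv_mul volume
        polarCoord.open_target.measurableSet A polarCoord.symm.injOn g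
    _ = ∫⁻ p in polarCoord.target, ENNReal.ofReal p.1 * g (polarCoord.symm p) := by
      refine setLIntegral_congr_fun polarCoord.open_target.measurableSet
        (fun p hp => ?_)
      rw [B_det, abs_of_pos hp.1]

theorem my_lintegral_polar_complex (g : ℂ → ENNReal) :
    ∫⁻ p in polarCoord.target, (ENNReal.ofReal p.1) * g (Complex.polarCoord.symm p) =
      ∫⁻ z, g z := by
  rw [← (Complex.volume_preserving_equiv_real_prod.symm).lintegral_comp_emb
    Complex.measurableEquivRealProd.symm.measurableEmbedding, ← my_lintegral_polar]
  rfl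

theorem quad_root_iff (k c r s d e : ℝ) (hk0 : 0 < k) (hk1 : k < 1) (hc : 0 < c) (hr : 0 < r)
    (hde : d ^ 2 + e ^ 2 = 1) (hs0 : 0 ≤ s) (hs : s ^ 2 = 1 - k ^ 2 * e ^ 2) :
    r ^ 2 ≤ k ^ 2 * (c ^ 2 + 2 * c * d * r + r ^ 2) ↔
      r ≤ c * k * (s + k * d) / (1 - k ^ 2) := by
  have h1 : 0 < 1 - k ^ 2 := by nlinarith
  have hd1 : d ^ 2 ≤ 1 := by nlinarith [sq_nonneg e]
  have hsd : k * d ≤ s := by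
    by_contra h
    push_neg at h
    have h2 : 0 < k * d := lt_of_le_of_lt hs0 h
    nlinarith
  set rp := c * k * (s + k * d) / (1 - k ^ 2) with hrp
  set rm := c * k * (k * d - s) / (1 - k ^ 2) with hrm
  have hkey : k ^ 2 * (c ^ 2 + 2 * c * d * r + r ^ 2) - r ^ 2
      = (1 - k ^ 2) * (rp - r) * (r - rm) := by
    rw [hrp, hrm]
    field_simp
    linear_combination ((c * k) ^ 2 * (1 - k ^ 2) + k ^ 4 * c ^ 2 - 2 * k ^ 2 * c ^ 2) * hs + ((c * k) ^ 2 * k ^ 2 * (1 - k ^ 2) + k ^ 6 * c ^ 2) * hde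
  have hrm0 : rm ≤ 0 := by
    apply div_nonpos_of_nonpos_of_nonneg _ h1.le
    exact mul_nonpos_of_nonneg_of_nonpos (by positivity) (by linarith)
  have h2 : 0 < r - rm := by linarith
  constructor
  · intro h
    by_contra hcon
    push_neg at hcon
    nlinarith [mul_pos (sub_pos.mpr hcon) h2]
  · intro h
    nlinarith [mul_nonneg (sub_nonneg.mpr h) h2.le]

theorem norm_polar_add (w : ℂ) (hw : w ≠ 0) (r θ : ℝ) :
    ‖Complex.polarCoord.symm (r, θ) + w‖ ^ 2 =
      r ^ 2 + 2 * r * ‖w‖ * Real.cos (θ - w.arg) + ‖w‖ ^ 2 := by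
  have hre : w.re = ‖w‖ * Real.cos w.arg := by
    rw [Complex.cos_arg hw, mul_div_assoc', mul_comm,
      mul_div_assoc, div_self (norm_ne_zero_iff.mpr hw), mul_one]
  have him : w.im = ‖w‖ * Real.sin w.arg := by
    rw [Complex.sin_arg, mul_div_assoc', mul_comm,
      mul_div_assoc, div_self (norm_ne_zero_iff.mpr hw), mul_one]
  rw [Complex.polarCoord_symm_apply, Complex.sq_norm, Complex.normSq_apply]
  simp only [Complex.add_re, Complex.add_im, Complex.mul_re, Complex.mul_im, Complex.ofReal_re,
    Complex.ofReal_im, Complex.add_re, Complex.I_re, Complex.I_im, Complex.cos_ofReal_re,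
    Complex.sin_ofReal_re]
  rw [Real.cos_sub, hre, him]
  ring_nf
  nlinarith [Real.sin_sq_add_cos_sq θ, Real.sin_sq_add_cos_sq w.arg]

theorem umax_nonneg (k c : ℝ) (hk0 : 0 < k) (hk1 : k < 1) (hc : 0 ≤ c) (Δ : ℝ) :
    0 ≤ c * k * (Real.sqrt (1 - k ^ 2 * Real.sin Δ ^ 2) + k * Real.cos Δ) / (1 - k ^ 2) := by
  have h1 : 0 < 1 - k ^ 2 := by nlinarith
  have harg : k ^ 2 * Real.cos Δ ^ 2 ≤ 1 - k ^ 2 * Real.sin Δ ^ 2 := by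
    nlinarith [Real.sin_sq_add_cos_sq Δ, sq_nonneg (Real.sin Δ), sq_nonneg k]
  have hs : k * |Real.cos Δ| ≤ Real.sqrt (1 - k ^ 2 * Real.sin Δ ^ 2) := by
    rw [← Real.sqrt_sq (by positivity : (0:ℝ) ≤ k * |Real.cos Δ|)]
    apply Real.sqrt_le_sqrt
    rw [mul_pow, sq_abs]
    exact harg
  have : 0 ≤ Real.sqrt (1 - k ^ 2 * Real.sin Δ ^ 2) + k * Real.cos Δ := by
    have := neg_abs_le (Real.cos Δ)
    nlinarith
  positivity

theorem lintegral_Ioc_ofReal_id (a : ℝ) (ha : 0 ≤ a) :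
    ∫⁻ r in Ioc (0:ℝ) a, ENNReal.ofReal r = ENNReal.ofReal (a ^ 2 / 2) := by
  rw [← ofReal_integral_eq_lintegral_ofReal]
  · rw [← intervalIntegral.integral_of_le ha, integral_id]
    norm_num
  · exact intervalIntegral.intervalIntegrable_id.1
  · filter_upwards [ae_restrict_mem measurableSet_Ioc] with r hr using hr.1.le

theorem complex_volume (k R_s : ℝ) (hk0 : 0 < k) (hk1 : k < 1) (hR : 0 < R_s)
    (w : ℂ) (hw : w ≠ 0) :
    volume {u : ℂ | ‖u‖ ≤ k * ‖u + w‖ ∧ ‖u‖ ≤ R_s} =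
      ENNReal.ofReal (∫ ξ in (0:ℝ)..(2*π),
        (min R_s (‖w‖ * k * (Real.sqrt (1 - k ^ 2 * Real.sin ξ ^ 2) + k * Real.cos ξ) /
          (1 - k ^ 2))) ^ 2 / 2) := by
  have h1 : (0:ℝ) < 1 - k ^ 2 := by nlinarith
  have hc : 0 < ‖w‖ := norm_pos_iff.mpr hw
  set c : ℝ := ‖w‖ with hcdef
  set φ : ℝ := w.arg with hφdef
  set G : ℝ → ℝ := fun Δ =>
    min R_s (c * k * (Real.sqrt (1 - k ^ 2 * Real.sin Δ ^ 2) + k * Real.cos Δ) / (1 - k ^ 2))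
    with hGdef
  have hG0 : ∀ Δ, 0 ≤ G Δ := fun Δ => le_min hR.le (umax_nonneg k c hk0 hk1 hc.le Δ)
  have hGc : Continuous G := by
    apply continuous_const.min
    apply Continuous.div_const
    apply continuous_const.mul
    apply Continuous.add _ (continuous_const.mul Real.continuous_cos)
    exact Real.continuous_sqrt.comp (by fun_prop)
  set A : Set ℂ := {u : ℂ | ‖u‖ ≤ k * ‖u + w‖ ∧ ‖u‖ ≤ R_s} with hAdef
  have hA : MeasurableSet A := by
    have h1 : MeasurableSet {u : ℂ | ‖u‖ ≤ k * ‖u + w‖} :=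
      measurableSet_le (by fun_prop) (by fun_prop)
    have h2 : MeasurableSet {u : ℂ | ‖u‖ ≤ R_s} :=
      measurableSet_le (by fun_prop) (by fun_prop)
    exact h1.inter h2
  set S : Set (ℝ × ℝ) := {q : ℝ × ℝ | q.1 ≤ G (q.2 - φ)} with hSdef
  have hS : MeasurableSet S := by
    apply measurableSet_le measurable_fst
    exact (hGc.comp (continuous_snd.sub continuous_const)).measurable
  -- membership characterization
  have hmem : ∀ p : ℝ × ℝ, p ∈ polarCoord.target →
      (Complex.polarCoord.symm p ∈ A ↔ p ∈ S) := by
    rintro ⟨r, θ⟩ hp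
    have hr : 0 < r := hp.1
    have hnr : ‖Complex.polarCoord.symm (r, θ)‖ = r := by
      rw [Complex.norm_polarCoord_symm, abs_of_pos hr]
    set N : ℝ := ‖Complex.polarCoord.symm (r, θ) + w‖ with hNdef
    have hN0 : 0 ≤ N := norm_nonneg _
    have hN2 : N ^ 2 = c ^ 2 + 2 * c * Real.cos (θ - φ) * r + r ^ 2 := by
      rw [hNdef, norm_polar_add w hw r θ]; ring
    have hsqrt_arg : 0 ≤ 1 - k ^ 2 * Real.sin (θ - φ) ^ 2 := by
      nlinarith [sq_nonneg (Real.sin (θ - φ)), Real.sin_sq_le_one (θ - φ)]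
    have step1 : r ≤ k * N ↔ r ^ 2 ≤ k ^ 2 * N ^ 2 := by
      constructor
      · intro h; nlinarith
      · intro h
        by_contra hcon
        push_neg at hcon
        nlinarith [mul_nonneg hk0.le hN0]
    have step2 : r ^ 2 ≤ k ^ 2 * N ^ 2 ↔
        r ≤ c * k * (Real.sqrt (1 - k ^ 2 * Real.sin (θ - φ) ^ 2) + k * Real.cos (θ - φ)) /
          (1 - k ^ 2) := by
      rw [hN2]
      exact quad_root_iff k c r (Real.sqrt (1 - k ^ 2 * Real.sin (θ - φ) ^ 2))
        (Real.cos (θ - φ)) (Real.sin (θ - φ)) hk0 hk1 hc hr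
        (by rw [← Real.cos_sq_add_sin_sq (θ - φ)])
        (Real.sqrt_nonneg _) (Real.sq_sqrt hsqrt_arg)
    simp only [hAdef, Set.mem_setOf_eq, hnr, hSdef, hGdef, le_min_iff]
    rw [← hNdef, step1, step2, and_comm]
  -- volume computation
  calc volume A = ∫⁻ u, A.indicator 1 u := (lintegral_indicator_one hA).symm
    _ = ∫⁻ p in polarCoord.target, ENNReal.ofReal p.1 *
          A.indicator 1 (Complex.polarCoord.symm p) := (my_lintegral_polar_complex _).symm
    _ = ∫⁻ p in polarCoord.target, S.indicator (fun q : ℝ × ℝ => ENNReal.ofReal q.1) p := by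
      refine setLIntegral_congr_fun polarCoord.open_target.measurableSet
        (fun p hp => ?_)
      by_cases h : p ∈ S
      · rw [Set.indicator_of_mem ((hmem p hp).mpr h), Set.indicator_of_mem h,
          Pi.one_apply, mul_one]
      · rw [Set.indicator_of_notMem (fun hh => h ((hmem p hp).mp hh)),
          Set.indicator_of_notMem h, mul_zero]
    _ = ∫⁻ θ in Ioo (-π) π, ∫⁻ r in Ioi (0:ℝ),
          S.indicator (fun q : ℝ × ℝ => ENNReal.ofReal q.1) (r, θ) := by
      have : polarCoord.target = Ioi (0:ℝ) ×ˢ Ioo (-π) π := rfl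
      rw [this, Measure.volume_eq_prod, ← Measure.prod_restrict]
      exact lintegral_prod_symm _ ((ENNReal.measurable_ofReal.comp measurable_fst).indicator hS).aemeasurable
    _ = ∫⁻ θ in Ioo (-π) π, ENNReal.ofReal (G (θ - φ) ^ 2 / 2) := by
      refine lintegral_congr fun θ => ?_
      have heq : ∀ r : ℝ, S.indicator (fun q : ℝ × ℝ => ENNReal.ofReal q.1) (r, θ)
          = (Iic (G (θ - φ))).indicator ENNReal.ofReal r := by
        intro r
        by_cases h : r ≤ G (θ - φ) <;>
          simp [Set.indicator_apply, hSdef, Set.mem_setOf_eq, h]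
      simp_rw [heq]
      rw [lintegral_indicator measurableSet_Iic, Measure.restrict_restrict measurableSet_Iic,
        Set.inter_comm, Set.Ioi_inter_Iic]
      exact lintegral_Ioc_ofReal_id _ (hG0 _)
    _ = ENNReal.ofReal (∫ θ in Ioo (-π) π, G (θ - φ) ^ 2 / 2) := by
      rw [← ofReal_integral_eq_lintegral_ofReal]
      · exact (((hGc.comp (continuous_id.sub continuous_const)).pow 2).div_const
          2).integrableOn_Icc.mono_set Ioo_subset_Icc_self
      · exact ae_of_all _ fun θ => by positivity
    _ = ENNReal.ofReal (∫ ξ in (0:ℝ)..(2*π), G ξ ^ 2 / 2) := by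
      congr 1
      have hper : Function.Periodic (fun ξ => G ξ ^ 2 / 2) (2 * π) := by
        intro ξ
        simp only [hGdef, Real.sin_add_two_pi, Real.cos_add_two_pi]
      calc ∫ θ in Ioo (-π) π, G (θ - φ) ^ 2 / 2
          = ∫ θ in (-π)..π, G (θ - φ) ^ 2 / 2 := by
            rw [intervalIntegral.integral_of_le (by linarith [pi_pos]), integral_Ioc_eq_integral_Ioo]
        _ = ∫ ξ in (-π - φ)..(π - φ), G ξ ^ 2 / 2 :=
            intervalIntegral.integral_comp_sub_right (fun ξ => G ξ ^ 2 / 2) φ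
        _ = ∫ ξ in (0:ℝ)..(2*π), G ξ ^ 2 / 2 := by
            have h2 : π - φ = (-π - φ) + 2 * π := by ring
            rw [h2, hper.intervalIntegral_add_eq (-π - φ) 0, zero_add]

/-- **Lemma 1, integral form (equation (7)).** For `0 < k < 1`, `R_s > 0` and `x ≠ 0`, a
point `U` uniformly distributed on `closedBall(x, R_s)` associates to the SBS with
probability `(1/(2πR_s²)) ∫₀^{2π} (min(R_s, ‖x‖k(√(1 − k² sin²ξ) + k cos ξ)/(1 − k²)))² dξ`. -/
theorem sbs_association_probability_integral_form
    (k R_s : ℝ) (hk0 : 0 < k) (hk1 : k < 1) (hR : 0 < R_s)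
    (x : EuclideanSpace ℝ (Fin 2)) (hx : x ≠ 0) :
    ((volume (closedBall x R_s))⁻¹ • volume.restrict (closedBall x R_s))
        {t : EuclideanSpace ℝ (Fin 2) | ‖t - x‖ ≤ k * ‖t‖} =
      ENNReal.ofReal ((1 / (2 * π * R_s ^ 2)) *
        ∫ ξ in (0 : ℝ)..(2 * π),
          (min R_s (‖x‖ * k * (Real.sqrt (1 - k ^ 2 * Real.sin ξ ^ 2) + k * Real.cos ξ) /
            (1 - k ^ 2))) ^ 2) := by
  set e := Complex.orthonormalBasisOneI.repr with hedef
  set w : ℂ := e.symm x with hwdef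
  have hw : w ≠ 0 := by
    simp [hwdef, hx]
  have hnw : ‖w‖ = ‖x‖ := e.symm.norm_map x
  have hS : MeasurableSet {t : EuclideanSpace ℝ (Fin 2) | ‖t - x‖ ≤ k * ‖t‖} :=
    measurableSet_le (by fun_prop) (by fun_prop)
  -- apply measure
  rw [Measure.smul_apply, Measure.restrict_apply hS, smul_eq_mul]
  -- compute the volume of the intersection via ℂ
  have hinter : volume ({t : EuclideanSpace ℝ (Fin 2) | ‖t - x‖ ≤ k * ‖t‖} ∩ closedBall x R_s)
      = volume {u : ℂ | ‖u‖ ≤ k * ‖u + w‖ ∧ ‖u‖ ≤ R_s} := by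
    have hmp : MeasurePreserving e volume volume :=
      Complex.orthonormalBasisOneI.measurePreserving_repr
    have hSm : MeasurableSet ({t : EuclideanSpace ℝ (Fin 2) | ‖t - x‖ ≤ k * ‖t‖} ∩
        closedBall x R_s) := hS.inter measurableSet_closedBall
    rw [← hmp.measure_preimage hSm.nullMeasurableSet]
    have hpre : e ⁻¹' ({t : EuclideanSpace ℝ (Fin 2) | ‖t - x‖ ≤ k * ‖t‖} ∩ closedBall x R_s)
        = (fun u : ℂ => u + w) '' {u : ℂ | ‖u‖ ≤ k * ‖u + w‖ ∧ ‖u‖ ≤ R_s} := by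
      ext z
      simp only [Set.mem_preimage, Set.mem_inter_iff, Set.mem_setOf_eq, mem_closedBall,
        dist_eq_norm, Set.mem_image]
      constructor
      · intro h
        refine ⟨z - w, ?_, by ring⟩
        have h1 : ‖e z - x‖ = ‖z - w‖ := by
          rw [hwdef, ← e.norm_map (z - w), map_sub, LinearIsometryEquiv.apply_symm_apply]
        have h2 : ‖e z‖ = ‖z‖ := e.norm_map z
        constructor
        · rw [sub_add_cancel]
          rw [h1, h2] at h
          exact h.1
        · rw [← h1]; exact h.2
      · rintro ⟨u, ⟨hu1, hu2⟩, rfl⟩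
        have h1 : ‖e (u + w) - x‖ = ‖u‖ := by
          rw [hwdef, ← e.norm_map u]
          congr 1
          rw [map_add, LinearIsometryEquiv.apply_symm_apply]
          abel
        have h2 : ‖e (u + w)‖ = ‖u + w‖ := e.norm_map _
        rw [h1, h2]
        exact ⟨hu1, hu2⟩
    rw [hpre]
    have : (fun u : ℂ => u + w) '' {u : ℂ | ‖u‖ ≤ k * ‖u + w‖ ∧ ‖u‖ ≤ R_s}
        = (fun u : ℂ => u - w) ⁻¹' {u : ℂ | ‖u‖ ≤ k * ‖u + w‖ ∧ ‖u‖ ≤ R_s} := by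
      ext z
      simp only [Set.mem_image, Set.mem_preimage]
      constructor
      · rintro ⟨u, hu, rfl⟩; simpa using hu
      · intro h; exact ⟨z - w, h, by ring⟩
    rw [this]
    simp only [sub_eq_add_neg]
    exact measure_preimage_add_right volume (-w) _
  rw [hinter, complex_volume k R_s hk0 hk1 hR w hw, hnw]
  -- volume of the ball
  have hvol : volume (closedBall x R_s) = ENNReal.ofReal (π * R_s ^ 2) := by
    rw [EuclideanSpace.volume_closedBall]
    simp only [Fintype.card_fin]
    rw [← ENNReal.ofReal_pow hR.le, ← ENNReal.ofReal_mul (by positivity)]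
    congr 1
    rw [show ((2:ℕ):ℝ)/2 + 1 = 2 by norm_num, Real.Gamma_two]
    rw [Real.sq_sqrt pi_pos.le]
    ring
  rw [hvol]
  have hJ : (0:ℝ) ≤ ∫ ξ in (0:ℝ)..(2*π),
      (min R_s (‖x‖ * k * (Real.sqrt (1 - k ^ 2 * Real.sin ξ ^ 2) + k * Real.cos ξ) /
        (1 - k ^ 2))) ^ 2 := by
    apply intervalIntegral.integral_nonneg (by positivity)
    intro ξ _
    positivity
  rw [← ENNReal.ofReal_inv_of_pos (by positivity), ← ENNReal.ofReal_mul (by positivity)]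
  congr 1
  set J := ∫ ξ in (0:ℝ)..(2*π),
      (min R_s (‖x‖ * k * (Real.sqrt (1 - k ^ 2 * Real.sin ξ ^ 2) + k * Real.cos ξ) /
        (1 - k ^ 2))) ^ 2 with hJdef
  rw [show (∫ ξ in (0:ℝ)..(2*π),
      (min R_s (‖x‖ * k * (Real.sqrt (1 - k ^ 2 * Real.sin ξ ^ 2) + k * Real.cos ξ) /
        (1 - k ^ 2))) ^ 2 / 2)
    = (∫ ξ in (0:ℝ)..(2*π),
      (min R_s (‖x‖ * k * (Real.sqrt (1 - k ^ 2 * Real.sin ξ ^ 2) + k * Real.cos ξ) /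
        (1 - k ^ 2))) ^ 2) / 2 from intervalIntegral.integral_div 2 _, ← hJdef]
  have hπ : (π:ℝ) ≠ 0 := pi_ne_zero
  have hRs : R_s ≠ 0 := hR.ne'
  field_simp
end
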